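/- Assume hᵢ > 0 for all i ∈ {1,…,n} and 0 < γᵢ < 1 for all i ∈ {1,…,n−1}. Set p_k := 1/(α_{n,k+1} − α_{n,k}) for 1 ≤ k ≤ n−1 and a(h,γ) := max( (α_{n,2}/α_{n,1} + 1)·p₁ , 2·max_{1≤k≤n−2}(p_k + p_{k+1}) , max_{1≤i≤n}(α_{n,i}hᵢ)⁻¹ ) (where the middle term is omitted when n = 2). Then S⁰_x(h,γ) is positive definite, its inverse satisfies λ_max((S⁰_x(h,γ))⁻¹) ≤ a(h,γ), and consequently λ_min(S⁰_x(h,γ)) ≥ 1/a(h,γ). -/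

import Mathlib

open Matrix

namespace MLSW6

noncomputable def alpha (n : ℕ) (ρ : Fin n → ℝ) (i k : Fin n) : ℝ :=
  if k < i then ρ k / ρ i else 1

noncomputable def Gam (n : ℕ) (ρ : Fin n → ℝ) : Matrix (Fin n) (Fin n) ℝ :=
  Matrix.of (alpha n ρ)

/-- `α_{n,i}`. -/
noncomputable def alphaN (n : ℕ) (ρ : Fin n → ℝ) (i : Fin n) : ℝ :=
  if h : n - 1 < n then alpha n ρ ⟨n - 1, h⟩ i else 1

noncomputable def Delta (n : ℕ) (ρ : Fin n → ℝ) : Matrix (Fin n) (Fin n) ℝ :=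
  Matrix.diagonal (alphaN n ρ)

/-- The density ratio `γᵢ = ρᵢ/ρᵢ₊₁`. -/
noncomputable def gam (n : ℕ) (ρ : Fin n → ℝ) (i : Fin (n - 1)) : ℝ :=
  ρ ⟨i.val, by have := i.isLt; omega⟩ / ρ ⟨i.val + 1, by have := i.isLt; omega⟩

/-- A 3×3 block matrix with n×n blocks, rows `[[A,B,C],[D,E,F],[G,H,K]]`. -/
def blk3 {n : ℕ} (A B C D E F G H K : Matrix (Fin n) (Fin n) ℝ) :
    Matrix (Fin n ⊕ Fin n ⊕ Fin n) (Fin n ⊕ Fin n ⊕ Fin n) ℝ :=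
  Matrix.fromBlocks A (Matrix.fromCols B C) (Matrix.fromRows D G)
    (Matrix.fromBlocks E F H K)

/-- `S⁰_x(h,γ) = diag(ΔΓ, ΔH, ΔH)`. -/
noncomputable def S0 (n : ℕ) (ρ : Fin n → ℝ) (h : Fin n → ℝ) :
    Matrix (Fin n ⊕ Fin n ⊕ Fin n) (Fin n ⊕ Fin n ⊕ Fin n) ℝ :=
  blk3 (Delta n ρ * Gam n ρ) 0 0
    0 (Delta n ρ * Matrix.diagonal h) 0
    0 0 (Delta n ρ * Matrix.diagonal h)

/-- `p_k := 1/(α_{n,k+1} − α_{n,k})` (0-indexed). -/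
noncomputable def pden (n : ℕ) (ρ : Fin n → ℝ) (k : ℕ) : ℝ :=
  if hk : k + 1 < n then
    1 / (alphaN n ρ ⟨k + 1, hk⟩ - alphaN n ρ ⟨k, by omega⟩)
  else 0

/-- The quantity `a(h,γ)`: the maximum of `(α_{n,2}/α_{n,1} + 1)p₁`,
`2·max_k (p_k + p_{k+1})` (omitted when `n = 2`: the supremum over the empty type is `0`,
which does not affect the maximum of positive quantities), and `max_i (α_{n,i}hᵢ)⁻¹`. -/
noncomputable def aval (n : ℕ) (hn : 2 ≤ n) (ρ h : Fin n → ℝ) : ℝ :=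
  max
    (max ((alphaN n ρ ⟨1, by omega⟩ / alphaN n ρ ⟨0, by omega⟩ + 1) * pden n ρ 0)
      (⨆ k : Fin (n - 2), 2 * (pden n ρ k.val + pden n ρ (k.val + 1))))
    (⨆ i : Fin n, (alphaN n ρ i * h i)⁻¹)

/-- Smallest eigenvalue: infimum of the Rayleigh quotient over the unit sphere. -/
noncomputable def lamMin {m : Type*} [Fintype m] (M : Matrix m m ℝ) : ℝ :=
  ⨅ x : {x : m → ℝ // x ⬝ᵥ x = 1}, x.1 ⬝ᵥ M.mulVec x.1

/-- Largest eigenvalue: supremum of the Rayleigh quotient over the unit sphere. -/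
noncomputable def lamMax {m : Type*} [Fintype m] (M : Matrix m m ℝ) : ℝ :=
  ⨆ x : {x : m → ℝ // x ⬝ᵥ x = 1}, x.1 ⬝ᵥ M.mulVec x.1

/-- capped ρ as an ℕ-indexed function -/
noncomputable def Pfun (n : ℕ) (ρ : Fin n → ℝ) (k : ℕ) : ℝ :=
  if h : min k (n-1) < n then ρ ⟨min k (n-1), h⟩ else 1

noncomputable def Afun (n : ℕ) (ρ : Fin n → ℝ) (k : ℕ) : ℝ := Pfun n ρ k / Pfun n ρ (n-1)

noncomputable def Dfun (n : ℕ) (ρ : Fin n → ℝ) (k : ℕ) : ℝ :=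
  if k = 0 then Afun n ρ 0 else Afun n ρ k - Afun n ρ (k-1)

section basic
variable {n : ℕ} {ρ : Fin n → ℝ}

theorem Pfun_eq (k : ℕ) (hk : k < n) : Pfun n ρ k = ρ ⟨k, hk⟩ := by
  have h1 : min k (n-1) = k := by omega
  simp [Pfun, h1, hk]

theorem Pfun_pos (hρ : ∀ i, 0 < ρ i) (k : ℕ) : 0 < Pfun n ρ k := by
  unfold Pfun
  split
  · exact hρ _
  · norm_num

theorem Pfun_cap (k : ℕ) (hk : n - 1 ≤ k) : Pfun n ρ k = Pfun n ρ (n-1) := by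
  have : min k (n-1) = min (n-1) (n-1) := by omega
  unfold Pfun; rw [this]

theorem Pfun_lt (hρ : ∀ i, 0 < ρ i)
    (hγ : ∀ i : Fin (n - 1), 0 < gam n ρ i ∧ gam n ρ i < 1)
    (k : ℕ) (hk : k + 1 ≤ n - 1) : Pfun n ρ k < Pfun n ρ (k+1) := by
  have hi : k < n - 1 := by omega
  have h3 := (hγ ⟨k, hi⟩).2
  unfold gam at h3
  rw [Pfun_eq k (by omega), Pfun_eq (k+1) (by omega)]
  have h2 : 0 < ρ ⟨k+1, by omega⟩ := hρ _
  rw [div_lt_one h2] at h3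
  exact h3

theorem Afun_pos (hρ : ∀ i, 0 < ρ i) (k : ℕ) : 0 < Afun n ρ k :=
  div_pos (Pfun_pos hρ k) (Pfun_pos hρ (n-1))

theorem Afun_lt (hρ : ∀ i, 0 < ρ i)
    (hγ : ∀ i : Fin (n - 1), 0 < gam n ρ i ∧ gam n ρ i < 1)
    (k : ℕ) (hk : k + 1 ≤ n - 1) : Afun n ρ k < Afun n ρ (k+1) :=
  div_lt_div_of_pos_right (Pfun_lt hρ hγ k hk) (Pfun_pos hρ (n-1))

theorem Afun_cap (hρ : ∀ i, 0 < ρ i) (k : ℕ) (hk : n - 1 ≤ k) : Afun n ρ k = 1 := by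
  unfold Afun
  rw [Pfun_cap k hk, div_self (ne_of_gt (Pfun_pos hρ (n-1)))]

theorem alphaN_eq (hn : 2 ≤ n) (hρ : ∀ i, 0 < ρ i) (i : Fin n) :
    alphaN n ρ i = Afun n ρ i.val := by
  have h1 : n - 1 < n := by omega
  unfold alphaN alpha
  rw [dif_pos h1]
  by_cases hi : i.val < n - 1
  · rw [if_pos (by exact hi), Afun, Pfun_eq i.val i.isLt, Pfun_eq (n-1) h1]
  · have : i.val = n - 1 := by omega
    rw [if_neg (by simpa [Fin.lt_def] using hi), Afun_cap hρ _ (by omega)]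

theorem alphaN_pos (hn : 2 ≤ n) (hρ : ∀ i, 0 < ρ i) (i : Fin n) : 0 < alphaN n ρ i := by
  rw [alphaN_eq hn hρ]; exact Afun_pos hρ _

theorem Dfun_pos (hρ : ∀ i, 0 < ρ i)
    (hγ : ∀ i : Fin (n - 1), 0 < gam n ρ i ∧ gam n ρ i < 1)
    (k : ℕ) (hk : k ≤ n - 1) : 0 < Dfun n ρ k := by
  unfold Dfun
  rcases Nat.eq_zero_or_pos k with h | h
  · subst h; rw [if_pos rfl]; exact Afun_pos hρ 0
  · rw [if_neg (by omega)]
    have h5 := Afun_lt hρ hγ (k-1) (by omega)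
    have hk1 : k - 1 + 1 = k := by omega
    rw [hk1] at h5
    linarith

theorem Dfun_zero (hn : 2 ≤ n) (hρ : ∀ i, 0 < ρ i) (k : ℕ) (hk : n ≤ k) : Dfun n ρ k = 0 := by
  unfold Dfun
  rw [if_neg (by omega), Afun_cap hρ k (by omega), Afun_cap hρ (k-1) (by omega), sub_self]

theorem Dfun_nonneg (hn : 2 ≤ n) (hρ : ∀ i, 0 < ρ i)
    (hγ : ∀ i : Fin (n - 1), 0 < gam n ρ i ∧ gam n ρ i < 1)
    (k : ℕ) : 0 ≤ Dfun n ρ k := by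
  rcases lt_or_ge k n with hk | hk
  · exact le_of_lt (Dfun_pos hρ hγ k (by omega))
  · rw [Dfun_zero hn hρ k hk]

theorem Dfun_tel (m : ℕ) : ∑ k ∈ Finset.range (m+1), Dfun n ρ k = Afun n ρ m := by
  induction m with
  | zero => simp [Dfun]
  | succ m ih =>
      rw [Finset.sum_range_succ, ih]
      unfold Dfun
      rw [if_neg (by omega)]
      simp

end basic

/-- upper triangular all-ones matrix -/
def Bm (n : ℕ) : Matrix (Fin n) (Fin n) ℝ :=
  Matrix.of fun k j => if k.val ≤ j.val then 1 else 0

/-- bidiagonal difference matrix, inverse of `Bm` -/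
def Cm (n : ℕ) : Matrix (Fin n) (Fin n) ℝ :=
  Matrix.of fun k j => (if j.val = k.val then (1:ℝ) else 0) - (if j.val = k.val + 1 then 1 else 0)

noncomputable def Tm (n : ℕ) (ρ : Fin n → ℝ) : Matrix (Fin n) (Fin n) ℝ :=
  Cm n * Matrix.diagonal (fun k => (Dfun n ρ k.val)⁻¹) * (Cm n)ᵀ

section mat
variable {n : ℕ} {ρ : Fin n → ℝ}

theorem hCB : Cm n * Bm n = 1 := by
  ext i j
  rw [Matrix.mul_apply, Matrix.one_apply]
  have key : ∀ k : Fin n, Cm n i k * Bm n k j =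
      (if k.val = i.val then (if k.val ≤ j.val then (1:ℝ) else 0) else 0)
      - (if k.val = i.val + 1 then (if k.val ≤ j.val then (1:ℝ) else 0) else 0) := by
    intro k
    simp only [Cm, Bm, Matrix.of_apply]
    split_ifs <;> ring
  rw [Finset.sum_congr rfl (fun k _ => key k), Finset.sum_sub_distrib]
  have e1 : ∀ (c : ℕ) , ∑ k : Fin n, (if k.val = c then (if k.val ≤ j.val then (1:ℝ) else 0) else 0)
      = if c < n then (if c ≤ j.val then (1:ℝ) else 0) else 0 := by
    intro c
    rw [Fin.sum_univ_eq_sum_range (fun k => if k = c then (if k ≤ j.val then (1:ℝ) else 0) else 0)]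
    rw [Finset.sum_ite_eq' (Finset.range n) c (fun k => if k ≤ j.val then (1:ℝ) else 0)]
    simp [Finset.mem_range]
  rw [e1, e1]
  have hi := i.isLt
  have hj := j.isLt
  rcases eq_or_ne i j with rfl | hne
  · rw [if_pos rfl]
    split_ifs <;> first | omega | norm_num
  · rw [if_neg hne]
    have hvne : i.val ≠ j.val := fun hv => hne (Fin.ext hv)
    split_ifs <;> first | omega | norm_num

theorem hBC : Bm n * Cm n = 1 := mul_eq_one_comm.mp hCB

theorem sum_ite_le (m : ℕ) (hm : m < n) (f : ℕ → ℝ) :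
    ∑ k ∈ Finset.range n, (if k ≤ m then f k else 0) = ∑ k ∈ Finset.range (m+1), f k := by
  rw [← Finset.sum_subset (Finset.range_subset_range.mpr (by omega : m + 1 ≤ n))
    (fun x _ hx => by rw [if_neg (by simpa [Finset.mem_range, Nat.lt_succ_iff] using hx)])]
  exact Finset.sum_congr rfl fun x hx => if_pos (by simpa [Finset.mem_range, Nat.lt_succ_iff] using hx)

theorem hfact (hn : 2 ≤ n) (hρ : ∀ i, 0 < ρ i) :
    Delta n ρ * Gam n ρ = (Bm n)ᵀ * (Matrix.diagonal (fun k : Fin n => Dfun n ρ k.val) * Bm n) := by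
  ext i j
  have hlhs : (Delta n ρ * Gam n ρ) i j = alphaN n ρ i * alpha n ρ i j := by
    simp [Delta, Gam, Matrix.diagonal_mul]
  rw [hlhs, Matrix.mul_apply]
  have key : ∀ k : Fin n, (Bm n)ᵀ i k * (Matrix.diagonal (fun k : Fin n => Dfun n ρ k.val) * Bm n) k j
      = (if k.val ≤ min i.val j.val then Dfun n ρ k.val else 0) := by
    intro k
    rw [Matrix.transpose_apply, Matrix.diagonal_mul]
    simp only [Bm, Matrix.of_apply]
    split_ifs <;> first | omega | ring
  rw [Finset.sum_congr rfl (fun k _ => key k)]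
  rw [Fin.sum_univ_eq_sum_range (fun k => if k ≤ min i.val j.val then Dfun n ρ k else 0)]
  rw [sum_ite_le (min i.val j.val) (by have := i.isLt; have := j.isLt; omega) _, Dfun_tel]
  -- now show `alphaN i * alpha i j = Afun (min i j)`
  rw [alphaN_eq hn hρ]
  unfold alpha
  by_cases hij : j < i
  · rw [if_pos hij]
    rw [Fin.lt_def] at hij
    have hmin : min i.val j.val = j.val := by omega
    rw [hmin]
    by_cases hi2 : i.val < n - 1
    · unfold Afun
      rw [Pfun_eq i.val i.isLt, Pfun_eq j.val j.isLt]
      have h3 : (0:ℝ) < ρ ⟨i.val, i.isLt⟩ := hρ _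
      have h4 : (0:ℝ) < Pfun n ρ (n-1) := Pfun_pos hρ _
      field_simp
    · have hi3 : i.val = n - 1 := by have := i.isLt; omega
      have hie : i = (⟨n-1, by omega⟩ : Fin n) := Fin.ext hi3
      rw [Afun_cap hρ i.val (by omega), one_mul]
      unfold Afun
      rw [Pfun_eq j.val j.isLt, Pfun_eq (n-1) (by omega)]
      have hre : ρ i = ρ ⟨n-1, by omega⟩ := congrArg ρ (Fin.ext hi3)
      rw [hre]
  · rw [if_neg hij]
    rw [Fin.lt_def, not_lt] at hij
    have hmin : min i.val j.val = i.val := by omega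
    rw [hmin, mul_one]

theorem Dg_mul_inv (hn : 2 ≤ n) (hρ : ∀ i, 0 < ρ i)
    (hγ : ∀ i : Fin (n - 1), 0 < gam n ρ i ∧ gam n ρ i < 1) :
    Matrix.diagonal (fun k : Fin n => Dfun n ρ k.val) *
      Matrix.diagonal (fun k : Fin n => (Dfun n ρ k.val)⁻¹) = 1 := by
  rw [Matrix.diagonal_mul_diagonal]
  have : ∀ k : Fin n, Dfun n ρ k.val * (Dfun n ρ k.val)⁻¹ = 1 := fun k =>
    mul_inv_cancel₀ (ne_of_gt (Dfun_pos hρ hγ k.val (by have := k.isLt; omega)))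
  simp only [this]
  exact Matrix.diagonal_one

theorem hMT (hn : 2 ≤ n) (hρ : ∀ i, 0 < ρ i)
    (hγ : ∀ i : Fin (n - 1), 0 < gam n ρ i ∧ gam n ρ i < 1) :
    (Delta n ρ * Gam n ρ) * Tm n ρ = 1 := by
  rw [hfact hn hρ, Tm]
  calc (Bm n)ᵀ * (Matrix.diagonal (fun k : Fin n => Dfun n ρ k.val) * Bm n) *
      (Cm n * Matrix.diagonal (fun k => (Dfun n ρ k.val)⁻¹) * (Cm n)ᵀ)
      = (Bm n)ᵀ * Matrix.diagonal (fun k : Fin n => Dfun n ρ k.val) * (Bm n * Cm n) *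
        Matrix.diagonal (fun k => (Dfun n ρ k.val)⁻¹) * (Cm n)ᵀ := by
        simp only [Matrix.mul_assoc]
    _ = (Bm n)ᵀ * (Matrix.diagonal (fun k : Fin n => Dfun n ρ k.val) *
        Matrix.diagonal (fun k => (Dfun n ρ k.val)⁻¹)) * (Cm n)ᵀ := by
        rw [hBC]; simp only [Matrix.mul_assoc, Matrix.one_mul]
    _ = (Bm n)ᵀ * (Cm n)ᵀ := by rw [Dg_mul_inv hn hρ hγ, Matrix.mul_one]
    _ = 1 := by rw [← Matrix.transpose_mul, hCB, Matrix.transpose_one]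

theorem hTsym : (Tm n ρ)ᵀ = Tm n ρ := by
  unfold Tm
  rw [Matrix.transpose_mul, Matrix.transpose_mul, Matrix.transpose_transpose,
    Matrix.diagonal_transpose, Matrix.mul_assoc]

theorem hMsym (hn : 2 ≤ n) (hρ : ∀ i, 0 < ρ i) : (Delta n ρ * Gam n ρ)ᵀ = Delta n ρ * Gam n ρ := by
  rw [hfact hn hρ, ← Matrix.mul_assoc, Matrix.transpose_mul, Matrix.transpose_mul,
    Matrix.transpose_transpose, Matrix.diagonal_transpose, Matrix.mul_assoc]

end mat

section abstractlemmas
variable {m : Type*} [Fintype m]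

theorem dot_self_nonneg (x : m → ℝ) : 0 ≤ x ⬝ᵥ x :=
  Finset.sum_nonneg fun i _ => mul_self_nonneg (x i)

theorem dot_self_pos {x : m → ℝ} (hx : x ≠ 0) : 0 < x ⬝ᵥ x := by
  obtain ⟨i, hi⟩ : ∃ i, x i ≠ 0 := by
    by_contra hc; push_neg at hc; exact hx (funext hc)
  exact Finset.sum_pos' (fun j _ => mul_self_nonneg (x j))
    ⟨i, Finset.mem_univ i, mul_self_pos.mpr hi⟩

theorem quad_le_rowsum (T : Matrix m m ℝ) (hsym : Tᵀ = T) {a : ℝ}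
    (hrow : ∀ i, ∑ j, |T i j| ≤ a) (x : m → ℝ) :
    x ⬝ᵥ T *ᵥ x ≤ a * (x ⬝ᵥ x) := by
  have hTsymm : ∀ i j, T j i = T i j := fun i j => by
    conv_lhs => rw [← hsym]
    exact Matrix.transpose_apply T j i
  have step1 : x ⬝ᵥ T *ᵥ x = ∑ i, ∑ j, x i * (T i j * x j) := by
    simp [dotProduct, Matrix.mulVec, Finset.mul_sum]
  have step2 : x ⬝ᵥ T *ᵥ x ≤ ∑ i, ∑ j, |T i j| * ((x i^2 + x j^2)/2) := by
    rw [step1]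
    refine Finset.sum_le_sum fun i _ => Finset.sum_le_sum fun j _ => ?_
    have h1 : x i * (T i j * x j) ≤ |x i * (T i j * x j)| := le_abs_self _
    have h2 : |x i * (T i j * x j)| = |T i j| * (|x i| * |x j|) := by
      rw [abs_mul, abs_mul]; ring
    nlinarith [sq_nonneg (|x i| - |x j|), sq_abs (x i), sq_abs (x j), abs_nonneg (T i j)]
  have e1 : ∀ i j : m, |T i j| * ((x i^2 + x j^2)/2)
      = |T i j| * x i ^ 2 / 2 + |T i j| * x j ^2 / 2 := fun i j => by ring
  have e2 : ∑ i : m, ∑ j : m, |T i j| * x j ^2 / 2 = ∑ i : m, ∑ j : m, |T i j| * x i ^2 / 2 := by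
    rw [Finset.sum_comm]
    exact Finset.sum_congr rfl fun i _ => Finset.sum_congr rfl fun j _ => by rw [hTsymm i j]
  have step3 : ∑ i, ∑ j, |T i j| * ((x i^2 + x j^2)/2) = ∑ i, (∑ j, |T i j|) * x i^2 := by
    simp only [e1, Finset.sum_add_distrib, e2]
    rw [← Finset.sum_add_distrib]
    refine Finset.sum_congr rfl fun i _ => ?_
    rw [← Finset.sum_add_distrib, Finset.sum_mul]
    refine Finset.sum_congr rfl fun j _ => by ring
  have step4 : ∑ i, (∑ j, |T i j|) * x i^2 ≤ a * (x ⬝ᵥ x) := by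
    have : ∀ i : m, (∑ j, |T i j|) * x i^2 ≤ a * x i^2 := fun i =>
      mul_le_mul_of_nonneg_right (hrow i) (sq_nonneg _)
    calc ∑ i, (∑ j, |T i j|) * x i^2 ≤ ∑ i, a * x i^2 := Finset.sum_le_sum fun i _ => this i
      _ = a * (x ⬝ᵥ x) := by rw [← Finset.mul_sum]; simp [dotProduct, sq]
  linarith [step2, step3 ▸ step2, step4]

theorem dot_swap (T : Matrix m m ℝ) (hsym : Tᵀ = T) (p q : m → ℝ) :
    p ⬝ᵥ T *ᵥ q = q ⬝ᵥ T *ᵥ p := by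
  rw [Matrix.dotProduct_mulVec]
  conv_lhs => rw [← hsym]
  rw [Matrix.vecMul_transpose, dotProduct_comm]

theorem psd_cs (T : Matrix m m ℝ) (hsym : Tᵀ = T) (hpsd : ∀ x, 0 ≤ x ⬝ᵥ T *ᵥ x)
    (u v : m → ℝ) : (u ⬝ᵥ T *ᵥ v)^2 ≤ (u ⬝ᵥ T *ᵥ u) * (v ⬝ᵥ T *ᵥ v) := by
  have key : ∀ c : ℝ, 0 ≤ (v ⬝ᵥ T *ᵥ v) * (c*c) + (2*(u ⬝ᵥ T *ᵥ v)) * c + (u ⬝ᵥ T *ᵥ u) := by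
    intro c
    have h0 := hpsd (u + c • v)
    have hvu : v ⬝ᵥ T *ᵥ u = u ⬝ᵥ T *ᵥ v := dot_swap T hsym v u
    have e : (u + c • v) ⬝ᵥ T *ᵥ (u + c • v)
        = (v ⬝ᵥ T *ᵥ v) * (c*c) + (2*(u ⬝ᵥ T *ᵥ v)) * c + (u ⬝ᵥ T *ᵥ u) := by
      rw [Matrix.mulVec_add, Matrix.mulVec_smul]
      rw [dotProduct_add, add_dotProduct, add_dotProduct,
        dotProduct_smul, smul_dotProduct, smul_dotProduct,
        dotProduct_smul, hvu]
      simp only [smul_eq_mul]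
      ring
    rw [e] at h0
    exact h0
  have hd := discrim_le_zero key
  rw [discrim] at hd
  nlinarith [hd]

end abstractlemmas

section tmfacts
variable {n : ℕ} {ρ : Fin n → ℝ}

theorem Tm_psd (hn : 2 ≤ n) (hρ : ∀ i, 0 < ρ i)
    (hγ : ∀ i : Fin (n - 1), 0 < gam n ρ i ∧ gam n ρ i < 1)
    (u : Fin n → ℝ) : 0 ≤ u ⬝ᵥ Tm n ρ *ᵥ u := by
  have e : u ⬝ᵥ Tm n ρ *ᵥ u = ((Cm n)ᵀ *ᵥ u) ⬝ᵥ
      (Matrix.diagonal (fun k : Fin n => (Dfun n ρ k.val)⁻¹)) *ᵥ ((Cm n)ᵀ *ᵥ u) := by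
    unfold Tm
    rw [← Matrix.mulVec_mulVec, ← Matrix.mulVec_mulVec, Matrix.dotProduct_mulVec]
    congr 1
    rw [← Matrix.transpose_transpose (Cm n), Matrix.vecMul_transpose, Matrix.transpose_transpose]
  rw [e]
  set z := (Cm n)ᵀ *ᵥ u with hz
  have : z ⬝ᵥ (Matrix.diagonal (fun k : Fin n => (Dfun n ρ k.val)⁻¹)) *ᵥ z
      = ∑ k, (Dfun n ρ k.val)⁻¹ * (z k * z k) := by
    simp [dotProduct, Matrix.mulVec_diagonal]
    exact Finset.sum_congr rfl fun k _ => by ring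
  rw [this]
  exact Finset.sum_nonneg fun k _ =>
    mul_nonneg (inv_nonneg.mpr (Dfun_nonneg hn hρ hγ k.val)) (mul_self_nonneg (z k))

theorem Tm_apply (i j : Fin n) :
    Tm n ρ i j = ∑ k, Cm n i k * (Dfun n ρ k.val)⁻¹ * Cm n j k := by
  unfold Tm
  rw [Matrix.mul_apply]
  exact Finset.sum_congr rfl fun k _ => by
    rw [Matrix.mul_diagonal, Matrix.transpose_apply]

theorem Cm_abs (i k : Fin n) :
    |Cm n i k| = (if k.val = i.val then (1:ℝ) else 0) + (if k.val = i.val + 1 then 1 else 0) := by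
  simp only [Cm, Matrix.of_apply]
  split_ifs <;> first | omega | norm_num

theorem Cm_colsum (k : Fin n) :
    ∑ j, |Cm n j k| = 1 + (if 1 ≤ k.val then (1:ℝ) else 0) := by
  have e : ∀ j : Fin n, |Cm n j k| =
      (if j.val = k.val then (1:ℝ) else 0) +
      (if j.val = k.val - 1 then (if 1 ≤ k.val then (1:ℝ) else 0) else 0) := by
    intro j
    rw [Cm_abs]
    split_ifs <;> first | omega | norm_num
  simp only [e, Finset.sum_add_distrib]
  rw [Fin.sum_univ_eq_sum_range (fun j => if j = k.val then (1:ℝ) else 0),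
    Fin.sum_univ_eq_sum_range (fun j => if j = k.val - 1 then (if 1 ≤ k.val then (1:ℝ) else 0) else 0),
    Finset.sum_ite_eq' (Finset.range n) k.val (fun _ => (1:ℝ)),
    Finset.sum_ite_eq' (Finset.range n) (k.val - 1) (fun _ => if 1 ≤ k.val then (1:ℝ) else 0)]
  have h1 : k.val ∈ Finset.range n := Finset.mem_range.mpr k.isLt
  have h2 : k.val - 1 ∈ Finset.range n := Finset.mem_range.mpr (by have := k.isLt; omega)
  rw [if_pos h1, if_pos h2]

theorem Tm_rowsum_le' (hn : 2 ≤ n) (hρ : ∀ i, 0 < ρ i)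
    (hγ : ∀ i : Fin (n - 1), 0 < gam n ρ i ∧ gam n ρ i < 1) (i : Fin n) :
    ∑ j, |Tm n ρ i j| ≤
      (Dfun n ρ i.val)⁻¹ * (1 + if 1 ≤ i.val then (1:ℝ) else 0)
      + (if i.val + 1 < n then (Dfun n ρ (i.val+1))⁻¹ * 2 else 0) := by
  have step1 : ∑ j, |Tm n ρ i j| ≤
      ∑ k, |Cm n i k| * ((Dfun n ρ k.val)⁻¹ * (∑ j, |Cm n j k|)) := by
    calc ∑ j, |Tm n ρ i j|
        ≤ ∑ j, ∑ k, |Cm n i k| * ((Dfun n ρ k.val)⁻¹ * |Cm n j k|) := by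
          refine Finset.sum_le_sum fun j _ => ?_
          rw [Tm_apply]
          refine (Finset.abs_sum_le_sum_abs _ _).trans (le_of_eq ?_)
          refine Finset.sum_congr rfl fun k _ => ?_
          rw [abs_mul, abs_mul, abs_of_nonneg (inv_nonneg.mpr (Dfun_nonneg hn hρ hγ k.val))]
          ring
      _ = ∑ k, |Cm n i k| * ((Dfun n ρ k.val)⁻¹ * (∑ j, |Cm n j k|)) := by
          rw [Finset.sum_comm]
          exact Finset.sum_congr rfl fun k _ => by rw [Finset.mul_sum, Finset.mul_sum]
  refine step1.trans (le_of_eq ?_)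
  have e : ∀ k : Fin n, |Cm n i k| * ((Dfun n ρ k.val)⁻¹ * (∑ j, |Cm n j k|))
      = (if k.val = i.val then (Dfun n ρ i.val)⁻¹ * (1 + if 1 ≤ i.val then (1:ℝ) else 0) else 0)
      + (if k.val = i.val + 1 then (Dfun n ρ (i.val+1))⁻¹ * 2 else 0) := by
    intro k
    rw [Cm_abs, Cm_colsum]
    by_cases h1 : k = i
    · subst h1
      rw [if_pos rfl, if_pos rfl, if_neg (by omega : ¬(k.val = k.val + 1)),
        if_neg (by omega : ¬(k.val = k.val + 1))]
      ring
    · have h1' : ¬(k.val = i.val) := fun hh => h1 (Fin.ext hh)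
      rw [if_neg h1', if_neg h1']
      by_cases h2 : k.val = i.val + 1
      · rw [if_pos h2, if_pos h2, h2, if_pos (by omega : (1:ℕ) ≤ i.val + 1)]
        ring
      · rw [if_neg h2, if_neg h2]
        ring
  simp only [e, Finset.sum_add_distrib]
  rw [Fin.sum_univ_eq_sum_range
      (fun k => if k = i.val then (Dfun n ρ i.val)⁻¹ * (1 + if 1 ≤ i.val then (1:ℝ) else 0) else 0),
    Fin.sum_univ_eq_sum_range
      (fun k => if k = i.val + 1 then (Dfun n ρ (i.val+1))⁻¹ * 2 else 0),
    Finset.sum_ite_eq' (Finset.range n) i.val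
      (fun _ => (Dfun n ρ i.val)⁻¹ * (1 + if 1 ≤ i.val then (1:ℝ) else 0)),
    Finset.sum_ite_eq' (Finset.range n) (i.val + 1) (fun _ => (Dfun n ρ (i.val+1))⁻¹ * 2)]
  rw [if_pos (Finset.mem_range.mpr i.isLt)]
  simp [Finset.mem_range]

theorem Tm_row_bound (hn : 2 ≤ n) (hρ : ∀ i, 0 < ρ i)
    (hγ : ∀ i : Fin (n - 1), 0 < gam n ρ i ∧ gam n ρ i < 1) {a : ℝ}
    (h0 : (Dfun n ρ 0)⁻¹ + 2*(Dfun n ρ 1)⁻¹ ≤ a)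
    (hmid : ∀ k : ℕ, 1 ≤ k → k ≤ n-2 → 2*(Dfun n ρ k)⁻¹ + 2*(Dfun n ρ (k+1))⁻¹ ≤ a)
    (i : Fin n) : ∑ j, |Tm n ρ i j| ≤ a := by
  refine (Tm_rowsum_le' hn hρ hγ i).trans ?_
  have hd : ∀ k : ℕ, 0 ≤ (Dfun n ρ k)⁻¹ := fun k => inv_nonneg.mpr (Dfun_nonneg hn hρ hγ k)
  rcases Nat.eq_zero_or_pos i.val with h1 | h1
  · rw [h1, if_neg (by omega), if_pos (by omega)]
    linarith [hd 0, hd 1]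
  · rw [if_pos (by omega : (1:ℕ) ≤ i.val)]
    by_cases h2 : i.val + 1 < n
    · rw [if_pos h2]
      have := hmid i.val h1 (by omega)
      linarith
    · rw [if_neg h2]
      have hi : i.val = n - 1 := by have := i.isLt; omega
      rcases Nat.lt_or_ge n 3 with h3 | h3
      · have hn2 : n = 2 := by omega
        have hi1 : i.val = 1 := by omega
        rw [hi1]
        linarith [hd 0, hd 1]
      · have := hmid (n-2) (by omega) (by omega)
        have he : n - 2 + 1 = n - 1 := by omega
        rw [he] at this
        rw [hi]
        linarith [hd (n-2), hd (n-1)]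

end tmfacts
section blockfacts
variable {m₁ m₂ : Type*} [Fintype m₁] [Fintype m₂]

theorem quad_fromBlocks (A : Matrix m₁ m₁ ℝ) (D : Matrix m₂ m₂ ℝ) (y : m₁ ⊕ m₂ → ℝ) :
    y ⬝ᵥ (Matrix.fromBlocks A 0 0 D) *ᵥ y
      = (y ∘ Sum.inl) ⬝ᵥ A *ᵥ (y ∘ Sum.inl) + (y ∘ Sum.inr) ⬝ᵥ D *ᵥ (y ∘ Sum.inr) := by
  rw [Matrix.fromBlocks_mulVec]
  simp only [Matrix.zero_mulVec, add_zero, zero_add, dotProduct, Fintype.sum_sum_type,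
    Sum.elim_inl, Sum.elim_inr, Function.comp]

theorem rowsum_fromBlocks (A : Matrix m₁ m₁ ℝ) (D : Matrix m₂ m₂ ℝ) (i : m₁ ⊕ m₂) :
    ∑ j, |Matrix.fromBlocks A 0 0 D i j| =
      Sum.elim (fun i₁ => ∑ j, |A i₁ j|) (fun i₂ => ∑ j, |D i₂ j|) i := by
  cases i <;>
    simp [Fintype.sum_sum_type, Matrix.fromBlocks_apply₁₁, Matrix.fromBlocks_apply₁₂,
      Matrix.fromBlocks_apply₂₁, Matrix.fromBlocks_apply₂₂]

theorem rowsum_diagonal {m : Type*} [Fintype m] [DecidableEq m] (d : m → ℝ)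
    (hd : ∀ i, 0 ≤ d i) (i : m) : ∑ j, |Matrix.diagonal d i j| = d i := by
  have e : ∀ j, |Matrix.diagonal d i j| = if j = i then d i else 0 := by
    intro j
    rcases eq_or_ne i j with rfl | hne
    · simp [Matrix.diagonal_apply_eq, abs_of_nonneg (hd i)]
    · simp [Matrix.diagonal_apply_ne _ hne, Ne.symm hne]
  simp only [e]
  rw [Finset.sum_ite_eq' Finset.univ i (fun _ => d i)]
  simp

theorem diag_quad_nonneg {m : Type*} [Fintype m] [DecidableEq m] (d : m → ℝ)
    (hd : ∀ i, 0 ≤ d i) (v : m → ℝ) : 0 ≤ v ⬝ᵥ Matrix.diagonal d *ᵥ v := by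
  have e : v ⬝ᵥ Matrix.diagonal d *ᵥ v = ∑ i, d i * (v i * v i) := by
    simp only [dotProduct, Matrix.mulVec_diagonal]
    exact Finset.sum_congr rfl fun i _ => by ring
  rw [e]
  exact Finset.sum_nonneg fun i _ => mul_nonneg (hd i) (mul_self_nonneg _)

end blockfacts

theorem S0_eq (n : ℕ) (ρ h : Fin n → ℝ) :
    S0 n ρ h = Matrix.fromBlocks (Delta n ρ * Gam n ρ) 0 0
      (Matrix.fromBlocks (Delta n ρ * Matrix.diagonal h) 0 0 (Delta n ρ * Matrix.diagonal h)) := by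
  unfold S0 blk3
  rw [Matrix.fromCols_zero, Matrix.fromRows_zero]

theorem stmt6 (n : ℕ) (hn : 2 ≤ n) (ρ : Fin n → ℝ) (hρ : ∀ i, 0 < ρ i)
    (h : Fin n → ℝ) (hh : ∀ i, 0 < h i)
    (hγ : ∀ i : Fin (n - 1), 0 < gam n ρ i ∧ gam n ρ i < 1) :
    (S0 n ρ h).PosDef ∧
    lamMax ((S0 n ρ h)⁻¹) ≤ aval n hn ρ h ∧
    1 / aval n hn ρ h ≤ lamMin (S0 n ρ h) := by
  set a := aval n hn ρ h with ha
  -- pden in terms of Dfun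
  have hpden : ∀ k : ℕ, k + 1 ≤ n - 1 → pden n ρ k = (Dfun n ρ (k+1))⁻¹ := by
    intro k hk
    unfold pden
    rw [dif_pos (by omega : k + 1 < n), alphaN_eq hn hρ, alphaN_eq hn hρ, one_div]
    congr 1
  -- access to the three components of `a`
  have haZ : ∀ i : Fin n, (alphaN n ρ i * h i)⁻¹ ≤ a := by
    intro i
    refine le_trans ?_ (le_max_right _ _)
    exact le_ciSup (f := fun i : Fin n => (alphaN n ρ i * h i)⁻¹)
      (Set.Finite.bddAbove (Set.finite_range _)) i
  have haX : (alphaN n ρ ⟨1, by omega⟩ / alphaN n ρ ⟨0, by omega⟩ + 1) * pden n ρ 0 ≤ a :=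
    le_trans (le_max_left _ _) (le_max_left _ _)
  have haY : ∀ k : Fin (n-2), 2 * (pden n ρ k.val + pden n ρ (k.val + 1)) ≤ a := fun k =>
    le_trans (le_trans (le_ciSup (f := fun k : Fin (n-2) =>
        2 * (pden n ρ k.val + pden n ρ (k.val + 1)))
      (Set.Finite.bddAbove (Set.finite_range _)) k)
      (le_max_right _ _)) (le_max_left _ _)
  have hahpos : ∀ i : Fin n, 0 < alphaN n ρ i * h i := fun i =>
    mul_pos (alphaN_pos hn hρ i) (hh i)
  have hapos : 0 < a :=
    lt_of_lt_of_le (inv_pos.mpr (hahpos ⟨0, by omega⟩)) (haZ ⟨0, by omega⟩)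
  -- row-sum hypotheses for `Tm`
  have hfirst : (Dfun n ρ 0)⁻¹ + 2*(Dfun n ρ 1)⁻¹
      = (alphaN n ρ ⟨1, by omega⟩ / alphaN n ρ ⟨0, by omega⟩ + 1) * pden n ρ 0 := by
    rw [alphaN_eq hn hρ, alphaN_eq hn hρ, hpden 0 (by omega)]
    have h1 : Dfun n ρ 0 = Afun n ρ 0 := by unfold Dfun; rw [if_pos rfl]
    have h2 : Dfun n ρ 1 = Afun n ρ 1 - Afun n ρ 0 := by unfold Dfun; norm_num
    rw [h1, h2]
    have p0 : 0 < Afun n ρ 0 := Afun_pos hρ 0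
    have pd : 0 < Afun n ρ 1 - Afun n ρ 0 := by
      have := Afun_lt hρ hγ 0 (by omega); linarith
    field_simp
    ring
  have h0 : (Dfun n ρ 0)⁻¹ + 2*(Dfun n ρ 1)⁻¹ ≤ a := by rw [hfirst]; exact haX
  have hmid : ∀ k : ℕ, 1 ≤ k → k ≤ n-2 → 2*(Dfun n ρ k)⁻¹ + 2*(Dfun n ρ (k+1))⁻¹ ≤ a := by
    intro k h1 h2
    have hk : k - 1 < n - 2 := by omega
    have h3 := haY ⟨k-1, hk⟩
    have e : k - 1 + 1 = k := by omega
    rw [hpden (k-1) (by omega)] at h3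
    rw [e] at h3
    rw [hpden k (by omega)] at h3
    linarith
  -- the explicit inverse
  set E' : Matrix (Fin n) (Fin n) ℝ := Matrix.diagonal (fun i => (alphaN n ρ i * h i)⁻¹)
    with hE'
  set T3 : Matrix (Fin n ⊕ Fin n ⊕ Fin n) (Fin n ⊕ Fin n ⊕ Fin n) ℝ :=
    Matrix.fromBlocks (Tm n ρ) 0 0 (Matrix.fromBlocks E' 0 0 E') with hT3
  have hEinv : (Delta n ρ * Matrix.diagonal h) * E' = 1 := by
    rw [hE', Delta, Matrix.diagonal_mul_diagonal, Matrix.diagonal_mul_diagonal]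
    have e : ∀ i, alphaN n ρ i * h i * (alphaN n ρ i * h i)⁻¹ = 1 := fun i =>
      mul_inv_cancel₀ (ne_of_gt (hahpos i))
    simp only [e]
    exact Matrix.diagonal_one
  have hS0T3 : S0 n ρ h * T3 = 1 := by
    rw [S0_eq, hT3]
    rw [Matrix.fromBlocks_multiply]
    simp only [Matrix.mul_zero, Matrix.zero_mul, add_zero, zero_add]
    rw [Matrix.fromBlocks_multiply]
    simp only [Matrix.mul_zero, Matrix.zero_mul, add_zero, zero_add]
    rw [hMT hn hρ hγ, hEinv, Matrix.fromBlocks_one, Matrix.fromBlocks_one]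
  have hT3S0 : T3 * S0 n ρ h = 1 := mul_eq_one_comm.mp hS0T3
  -- symmetry
  have hE'sym : E'ᵀ = E' := by rw [hE', Matrix.diagonal_transpose]
  have hT3sym : T3ᵀ = T3 := by
    rw [hT3, Matrix.fromBlocks_transpose, Matrix.fromBlocks_transpose,
      hTsym, hE'sym]
    simp only [Matrix.transpose_zero]
  have hEsym : (Delta n ρ * Matrix.diagonal h)ᵀ = Delta n ρ * Matrix.diagonal h := by
    rw [Delta, Matrix.diagonal_mul_diagonal, Matrix.diagonal_transpose]
  have hS0sym : (S0 n ρ h)ᵀ = S0 n ρ h := by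
    rw [S0_eq, Matrix.fromBlocks_transpose, Matrix.fromBlocks_transpose,
      hMsym hn hρ, hEsym]
    simp only [Matrix.transpose_zero]
  -- PSD of T3
  have hdnn : ∀ i : Fin n, 0 ≤ (alphaN n ρ i * h i)⁻¹ := fun i =>
    inv_nonneg.mpr (le_of_lt (hahpos i))
  have hPSD3 : ∀ y, 0 ≤ y ⬝ᵥ T3 *ᵥ y := by
    intro y
    rw [hT3, quad_fromBlocks, quad_fromBlocks]
    have q1 := Tm_psd hn hρ hγ (y ∘ Sum.inl)
    have q2 := diag_quad_nonneg _ hdnn ((y ∘ Sum.inr) ∘ Sum.inl)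
    have q3 := diag_quad_nonneg _ hdnn ((y ∘ Sum.inr) ∘ Sum.inr)
    rw [hE']
    linarith
  -- Gershgorin bound for T3
  have hT3row : ∀ i, ∑ j, |T3 i j| ≤ a := by
    intro i
    rw [hT3, rowsum_fromBlocks]
    cases i with
    | inl i1 =>
        simpa using Tm_row_bound hn hρ hγ h0 hmid i1
    | inr i2 =>
        rw [Sum.elim_inr]
        rw [rowsum_fromBlocks]
        cases i2 with
        | inl i3 =>
            rw [Sum.elim_inl, hE', rowsum_diagonal _ hdnn]
            exact haZ i3
        | inr i4 =>
            rw [Sum.elim_inr, hE', rowsum_diagonal _ hdnn]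
            exact haZ i4
  have hGersh : ∀ x, x ⬝ᵥ T3 *ᵥ x ≤ a * (x ⬝ᵥ x) := quad_le_rowsum T3 hT3sym hT3row
  -- lower bound for the quadratic form of S0
  have hLower : ∀ x, (1/a) * (x ⬝ᵥ x) ≤ x ⬝ᵥ S0 n ρ h *ᵥ x := by
    intro x
    have hx : T3 *ᵥ (S0 n ρ h *ᵥ x) = x := by
      rw [Matrix.mulVec_mulVec, hT3S0, Matrix.one_mulVec]
    set y := S0 n ρ h *ᵥ x with hy
    have hq : y ⬝ᵥ T3 *ᵥ y = x ⬝ᵥ S0 n ρ h *ᵥ x := by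
      rw [hx, dotProduct_comm]
    have hr : y ⬝ᵥ T3 *ᵥ x = x ⬝ᵥ x := by
      rw [dot_swap T3 hT3sym, hx]
    have hcs := psd_cs T3 hT3sym hPSD3 y x
    rw [hr, hq] at hcs
    have hg := hGersh x
    have hq0 : 0 ≤ x ⬝ᵥ S0 n ρ h *ᵥ x := hq ▸ hPSD3 y
    rcases eq_or_lt_of_le (dot_self_nonneg x) with hr0 | hr0
    · rw [← hr0, mul_zero]
      exact hq0
    · have h1 : (x ⬝ᵥ x)^2 ≤ (x ⬝ᵥ S0 n ρ h *ᵥ x) * (a * (x ⬝ᵥ x)) :=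
        le_trans hcs (mul_le_mul_of_nonneg_left hg hq0)
      have h2 : x ⬝ᵥ x ≤ a * (x ⬝ᵥ S0 n ρ h *ᵥ x) := by nlinarith [h1, hr0]
      calc (1/a) * (x ⬝ᵥ x) ≤ (1/a) * (a * (x ⬝ᵥ S0 n ρ h *ᵥ x)) := by
            apply mul_le_mul_of_nonneg_left h2
            positivity
        _ = x ⬝ᵥ S0 n ρ h *ᵥ x := by field_simp
  -- a unit vector
  have hunit : Nonempty {x : (Fin n ⊕ Fin n ⊕ Fin n) → ℝ // x ⬝ᵥ x = 1} := by
    refine ⟨⟨fun j => if j = Sum.inl ⟨0, by omega⟩ then 1 else 0, ?_⟩⟩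
    have e : ∀ j : Fin n ⊕ Fin n ⊕ Fin n,
        (if j = Sum.inl ⟨0, by omega⟩ then (1:ℝ) else 0) *
        (if j = Sum.inl ⟨0, by omega⟩ then (1:ℝ) else 0)
        = if j = Sum.inl ⟨0, by omega⟩ then (1:ℝ) else 0 := by
      intro j; split_ifs <;> norm_num
    simp only [dotProduct, e]
    rw [Finset.sum_ite_eq' Finset.univ (Sum.inl ⟨0, by omega⟩ : Fin n ⊕ Fin n ⊕ Fin n)
      (fun _ => (1:ℝ))]
    simp
  refine ⟨Matrix.PosDef.of_dotProduct_mulVec_pos ?_ ?_, ?_, ?_⟩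
  · -- IsHermitian
    have e : (S0 n ρ h)ᴴ = (S0 n ρ h)ᵀ := by
      ext i j
      simp [Matrix.conjTranspose_apply, Matrix.transpose_apply]
    show (S0 n ρ h)ᴴ = S0 n ρ h
    rw [e, hS0sym]
  · -- positivity
    intro x hx
    have h1 := hLower x
    have h2 : 0 < (1/a) * (x ⬝ᵥ x) := mul_pos (by positivity) (dot_self_pos hx)
    have : (0:ℝ) < x ⬝ᵥ S0 n ρ h *ᵥ x := lt_of_lt_of_le h2 h1
    simpa using this
  · -- lamMax bound
    have hinv : (S0 n ρ h)⁻¹ = T3 := Matrix.inv_eq_right_inv hS0T3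
    rw [hinv]
    unfold lamMax
    refine ciSup_le fun x => ?_
    have h1 := hGersh x.1
    rw [x.2, mul_one] at h1
    exact h1
  · -- lamMin bound
    unfold lamMin
    refine le_ciInf fun x => ?_
    have h1 := hLower x.1
    rw [x.2, mul_one] at h1
    exact h1

end MLSW6
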